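/- For integers n > p ≥ 0, the maximum exponent of q appearing in the polynomial ∑_{s ≡ p (mod 2), 0 ≤ s ≤ p} q^{1 + binom(n-s+1,2) - binom(p-s+2,2)} · binom(⌊(n-s-1)/2⌋, (p-s)/2)_{q^{-4}} · q^{4·⌊(n-s-1)/2 - (p-s)/2⌋·((p-s)/2)} (where each summand is normalized so the q-binomial is evaluated as a polynomial in q^{-4} times its top power to yield a polynomial in q) equals 1 + binom(n+1,2) - binom(p+2,2) if p is even, and 1 + binom(n,2) - binom(p+1,2) if p is odd. -/

import Mathlib

open Finset Polynomial LaurentPolynomial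

private lemma choose_two_add (x y : ℕ) : (x + y).choose 2 = x.choose 2 + y.choose 2 + x * y := by
  induction y with
  | zero => simp
  | succ y ih =>
      have h1 : (x + y + 1).choose 2 = (x + y).choose 1 + (x + y).choose 2 :=
        Nat.choose_succ_succ _ _
      have h2 : (y + 1).choose 2 = y.choose 1 + y.choose 2 := Nat.choose_succ_succ _ _
      rw [show x + (y + 1) = x + y + 1 by ring, h1, h2, ih, Nat.choose_one_right,
        Nat.choose_one_right]
      ring

private lemma choose_two_ineq (b d g : ℕ) (hdb : d ≤ b) :
    (d + g).choose 2 + b.choose 2 ≤ (b + g).choose 2 + d.choose 2 := by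
  rw [choose_two_add, choose_two_add]
  have h := Nat.mul_le_mul_right g hdb
  linarith

private lemma G_const_coeff (G : ℕ → ℕ → Polynomial ℤ)
    (hG : ∀ a b : ℕ, b ≤ a →
      G a b * ∏ i ∈ Finset.range b, (1 - (Polynomial.X : Polynomial ℤ) ^ (b - i)) =
        ∏ i ∈ Finset.range b, (1 - (Polynomial.X : Polynomial ℤ) ^ (a - i)))
    (a b : ℕ) (h : b ≤ a) : (G a b).coeff 0 = 1 := by
  have h2 := congrArg (Polynomial.eval 0) (hG a b h)
  rw [Polynomial.eval_mul, Polynomial.eval_prod, Polynomial.eval_prod] at h2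
  have hb : ∀ i ∈ Finset.range b,
      Polynomial.eval (0 : ℤ) (1 - Polynomial.X ^ (b - i)) = 1 := by
    intro i hi
    have hi' := Finset.mem_range.mp hi
    rw [Polynomial.eval_sub, Polynomial.eval_one, Polynomial.eval_pow, Polynomial.eval_X,
      zero_pow (by omega : b - i ≠ 0), sub_zero]
  have ha : ∀ i ∈ Finset.range b,
      Polynomial.eval (0 : ℤ) (1 - Polynomial.X ^ (a - i)) = 1 := by
    intro i hi
    have hi' := Finset.mem_range.mp hi
    rw [Polynomial.eval_sub, Polynomial.eval_one, Polynomial.eval_pow, Polynomial.eval_X,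
      zero_pow (by omega : a - i ≠ 0), sub_zero]
  rw [Finset.prod_congr rfl hb, Finset.prod_congr rfl ha, Finset.prod_const_one,
    mul_one] at h2
  rw [Polynomial.coeff_zero_eq_eval_zero, h2]

private lemma eval2_T_apply (f : Polynomial ℤ) (c : ℤ) (hc : 0 ≤ c) :
    (Polynomial.eval₂ (algebraMap ℤ (LaurentPolynomial ℤ)) (LaurentPolynomial.T (-4)) f).coeff c
      = if c = 0 then f.coeff 0 else 0 := by
  rw [Polynomial.eval₂_eq_sum_range]
  have step : ∀ i : ℕ, (algebraMap ℤ (LaurentPolynomial ℤ)) (f.coeff i) * T (-4) ^ i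
      = AddMonoidAlgebra.single ((i : ℤ) * (-4)) (f.coeff i) := by
    intro i
    rw [T_pow, single_eq_C_mul_T, LaurentPolynomial.C_eq_algebraMap]
  rw [Finset.sum_congr rfl (fun i _ => step i), AddMonoidAlgebra.coeff_sum, Finsupp.finset_sum_apply]
  simp only [AddMonoidAlgebra.coeff_single, Finsupp.single_apply]
  by_cases h0 : c = 0
  · subst h0
    rw [if_pos rfl]
    rw [Finset.sum_eq_single_of_mem 0 (Finset.mem_range.mpr (Nat.succ_pos _))]
    · simp
    · intro i _ hi
      rw [if_neg]
      intro h; apply hi; omega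
  · rw [if_neg h0]
    apply Finset.sum_eq_zero
    intro i _
    rw [if_neg]
    intro h; omega

theorem symm_top_exponent (n p : ℕ) (hpn : p < n)
    (G : ℕ → ℕ → Polynomial ℤ)
    (hG : ∀ a b : ℕ, b ≤ a →
      G a b * ∏ i ∈ Finset.range b, (1 - (Polynomial.X : Polynomial ℤ) ^ (b - i)) =
        ∏ i ∈ Finset.range b, (1 - (Polynomial.X : Polynomial ℤ) ^ (a - i))) :
    (∑ s ∈ (Finset.range (p + 1)).filter (fun s => s % 2 = p % 2),
        LaurentPolynomial.T (1 + ((n - s + 1).choose 2 : ℤ) - ((p - s + 2).choose 2 : ℤ)) *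
          Polynomial.eval₂ (algebraMap ℤ (LaurentPolynomial ℤ)) (LaurentPolynomial.T (-4))
            (G ((n - s - 1) / 2) ((p - s) / 2))).coeff.support.max =
      ((if p % 2 = 0 then 1 + ((n + 1).choose 2 : ℤ) - ((p + 2).choose 2 : ℤ)
        else 1 + (n.choose 2 : ℤ) - ((p + 1).choose 2 : ℤ) : ℤ) : WithBot ℤ) := by
  set e : ℕ → ℤ := fun s => 1 + ((n - s + 1).choose 2 : ℤ) - ((p - s + 2).choose 2 : ℤ) with he
  set F := (Finset.range (p + 1)).filter (fun s => s % 2 = p % 2) with hF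
  set H : ℕ → LaurentPolynomial ℤ := fun s =>
    Polynomial.eval₂ (algebraMap ℤ (LaurentPolynomial ℤ)) (LaurentPolynomial.T (-4))
      (G ((n - s - 1) / 2) ((p - s) / 2)) with hH
  set S : LaurentPolynomial ℤ := ∑ s ∈ F, LaurentPolynomial.T (e s) * H s with hS
  set E : ℤ := e (p % 2) with hE
  -- the RHS equals E
  have hRHS : (if p % 2 = 0 then 1 + ((n + 1).choose 2 : ℤ) - ((p + 2).choose 2 : ℤ)
      else 1 + (n.choose 2 : ℤ) - ((p + 1).choose 2 : ℤ)) = E := by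
    rcases Nat.mod_two_eq_zero_or_one p with h | h
    · rw [if_pos h, hE, h, he]
      simp
    · rw [if_neg (by omega), hE, h, he]
      have h1 : n - 1 + 1 = n := by omega
      have h2 : p - 1 + 2 = p + 1 := by omega
      simp only [h1, h2]
  rw [hRHS]
  -- membership facts
  have hmemF : ∀ s ∈ F, s ≤ p ∧ s % 2 = p % 2 := by
    intro s hs
    rw [hF, Finset.mem_filter, Finset.mem_range] at hs
    exact ⟨by omega, hs.2⟩
  have hle : ∀ s ∈ F, e s ≤ E := by
    intro s hs
    obtain ⟨hsp, hsm⟩ := hmemF s hs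
    rw [hE, he]
    simp only
    have hs0 : p % 2 ≤ s := by omega
    have e1 : n - p % 2 + 1 = (n - s + 1) + (s - p % 2) := by omega
    have e2 : p - p % 2 + 2 = (p - s + 2) + (s - p % 2) := by omega
    have key := choose_two_ineq (n - s + 1) (p - s + 2) (s - p % 2) (by omega)
    rw [e1, e2]
    omega
  -- coefficient of each term
  have hterm : ∀ s ∈ F, ∀ c : ℤ, E ≤ c →
      ((LaurentPolynomial.T (e s) * H s : LaurentPolynomial ℤ)).coeff c = if c = e s then 1 else 0 := by
    intro s hs c hc
    obtain ⟨hsp, _⟩ := hmemF s hs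
    have h1 : ((LaurentPolynomial.T (e s) * H s : LaurentPolynomial ℤ)).coeff c = (H s).coeff (-(e s) + c) := by
      rw [show (LaurentPolynomial.T (e s) : LaurentPolynomial ℤ) = AddMonoidAlgebra.single (e s) 1 from rfl,
        AddMonoidAlgebra.coeff_single_mul_apply, one_mul]
    have hc' : (0 : ℤ) ≤ -(e s) + c := by have := hle s hs; omega
    rw [h1, hH]
    rw [eval2_T_apply _ _ hc']
    have hba : (p - s) / 2 ≤ (n - s - 1) / 2 :=
      Nat.div_le_div_right (by omega)
    have hcz := G_const_coeff G hG _ _ hba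
    by_cases h : c = e s
    · rw [if_pos (by omega), if_pos h, hcz]
    · rw [if_neg (by omega), if_neg h]
  -- coefficient of the sum
  have hsum : ∀ c : ℤ, E ≤ c → S.coeff c = ∑ s ∈ F, (if c = e s then (1 : ℤ) else 0) := by
    intro c hc
    rw [hS, AddMonoidAlgebra.coeff_sum, Finsupp.finset_sum_apply]
    exact Finset.sum_congr rfl (fun s hs => hterm s hs c hc)
  have hs0F : p % 2 ∈ F := by
    rw [hF, Finset.mem_filter, Finset.mem_range]
    constructor
    · omega
    · omega
  apply le_antisymm
  · apply Finset.max_le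
    intro m hm
    rw [Finsupp.mem_support_iff] at hm
    by_contra hcon
    have hEm : E < m := by
      rw [not_le, WithBot.coe_lt_coe] at hcon
      exact hcon
    apply hm
    rw [hsum m (le_of_lt hEm)]
    apply Finset.sum_eq_zero
    intro s hs
    rw [if_neg]
    have := hle s hs
    omega
  · apply Finset.le_max
    rw [Finsupp.mem_support_iff, hsum E le_rfl]
    have hpos : (1 : ℤ) ≤ ∑ s ∈ F, (if E = e s then (1 : ℤ) else 0) := by
      have h1 : (if E = e (p % 2) then (1 : ℤ) else 0) = 1 := if_pos hE
      calc (1 : ℤ) = (if E = e (p % 2) then (1 : ℤ) else 0) := h1.symm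
        _ ≤ ∑ s ∈ F, (if E = e s then (1 : ℤ) else 0) :=
            Finset.single_le_sum (f := fun s => if E = e s then (1 : ℤ) else 0)
              (fun s _ => by positivity) hs0F
    omega
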